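/- Let G=(V,E) be a connected simple graph that admits a well-connected set of size at least 2n. Then every MRPP instance on G with n robots, pairwise-distinct start vertices s_1,…,s_n and pairwise-distinct goal vertices g_1,…,g_n — regardless of the distribution of the starts and goals — is solvable: there exist a time horizon T ∈ ℕ and trajectories p_i : {0,1,…,T} → V with p_i(0) = s_i, p_i(T) = g_i, each step staying in place or moving along an edge of G, no two robots at the same vertex at the same time step, and no two robots swapping along an edge in the same step. -/
import Mathlib

open Function SimpleGraph

namespace MRPPAux

variable {V : Type*}

/-- One robot moves along an edge into an unoccupied vertex. -/
def MoveR {n : ℕ} (G : SimpleGraph V) (c c' : Fin n → V) : Prop :=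
  ∃ i, G.Adj (c i) (c' i) ∧ (∀ j, c' i ≠ c j) ∧ (∀ j, j ≠ i → c' j = c j)

def ReachR {n : ℕ} (G : SimpleGraph V) : (Fin n → V) → (Fin n → V) → Prop :=
  Relation.ReflTransGen (MoveR G)

variable {G : SimpleGraph V} {n : ℕ}

lemma MoveR.inj {c c' : Fin n → V} (h : MoveR G c c') (hc : Injective c) :
    Injective c' := by
  obtain ⟨i, hadj, hfree, hoth⟩ := h
  intro j k hjk
  by_cases hj : j = i <;> by_cases hk : k = i
  · rw [hj, hk]
  · subst hj; rw [hoth k hk] at hjk; exact absurd hjk (hfree k)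
  · subst hk; rw [hoth j hj] at hjk; exact absurd hjk.symm (hfree j)
  · rw [hoth j hj, hoth k hk] at hjk; exact hc hjk

lemma MoveR.symm {c c' : Fin n → V} (h : MoveR G c c') (hc : Injective c) :
    MoveR G c' c := by
  obtain ⟨i, hadj, hfree, hoth⟩ := h
  refine ⟨i, hadj.symm, ?_, fun j hj => (hoth j hj).symm⟩
  intro j
  by_cases hj : j = i
  · subst hj; exact hadj.ne
  · rw [hoth j hj]; exact fun hh => hj (hc hh.symm)

lemma ReachR.inj {c c' : Fin n → V} (h : ReachR G c c') (hc : Injective c) :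
    Injective c' := by
  induction h with
  | refl => exact hc
  | tail _ hbc ih => exact hbc.inj ih

lemma ReachR.symm' {c c' : Fin n → V} (h : ReachR G c c') (hc : Injective c) :
    ReachR G c' c := by
  induction h with
  | refl => exact Relation.ReflTransGen.refl
  | tail hab hbc ih =>
      exact Relation.ReflTransGen.trans
        (Relation.ReflTransGen.single (hbc.symm (ReachR.inj hab hc))) ih


/-- Move robot `i` along a simple path all of whose vertices (other than the start)
are unoccupied. -/
lemma reach_along_path {c : Fin n → V} (hc : Injective c) (i : Fin n)
    {a b : V} (p : G.Walk a b) (hnd : p.support.Nodup) (ha : c i = a)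
    (hfree : ∀ v ∈ p.support, v ≠ a → ∀ j, c j ≠ v) :
    ReachR G c (Function.update c i b) := by
  induction p generalizing c with
  | nil =>
      rw [← ha, Function.update_eq_self]
      exact Relation.ReflTransGen.refl
  | @cons u x w h q ih =>
      rw [Walk.support_cons, List.nodup_cons] at hnd
      have hxq : x ∈ q.support := q.start_mem_support
      have hxa : x ≠ u := fun hxa => hnd.1 (hxa ▸ hxq)
      have hxfree : ∀ j, c j ≠ x :=
        hfree x (by rw [Walk.support_cons]; exact List.mem_cons_of_mem _ hxq) hxa
      set c₂ := Function.update c i x with hc₂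
      have hmove : MoveR G c c₂ := by
        refine ⟨i, ?_, ?_, ?_⟩
        · rw [hc₂, Function.update_self, ha]; exact h
        · rw [hc₂, Function.update_self]; exact fun j => (hxfree j).symm
        · intro j hj; rw [hc₂, Function.update_of_ne hj]
      have hc₂inj : Injective c₂ := hmove.inj hc
      have hc₂x : c₂ i = x := Function.update_self i x c
      have hfree₂ : ∀ v ∈ q.support, v ≠ x → ∀ j, c₂ j ≠ v := by
        intro v hv hvx j
        by_cases hj : j = i
        · subst hj; rw [hc₂x]; exact fun hh => hvx hh.symm
        · rw [hc₂, Function.update_of_ne hj]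
          have hvu : v ≠ u := fun hvu => hnd.1 (hvu ▸ hv)
          exact hfree v (by rw [Walk.support_cons]; exact List.mem_cons_of_mem _ hv) hvu j
      have hrest := ih hc₂inj hnd.2 hc₂x hfree₂
      have heq : Function.update c₂ i w = Function.update c i w := by
        simp [hc₂, Function.update_idem]
      rw [heq] at hrest
      exact Relation.ReflTransGen.head hmove hrest


/-- Number of robots outside `M`. -/
noncomputable def offM (M : Set V) {n : ℕ} (c : Fin n → V) : ℕ :=
  Set.ncard {i : Fin n | c i ∉ M}

/-- Key routing lemma: given a walk from an occupied vertex `a` to an unoccupied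
vertex `f ∈ M`, we can reach a configuration where either the number of robots
outside `M` drops, or (if `a ∈ M`) the vertex `a` becomes free, only changing
occupancy on the support of the walk. -/
lemma lemW (M : Set V) :
    ∀ L : ℕ, ∀ c : Fin n → V, Injective c → ∀ (i : Fin n) (a f : V) (w : G.Walk a f),
      w.length ≤ L → f ∈ M → (∀ j, c j ≠ f) → c i = a → a ≠ f →
      ∃ d : Fin n → V, ReachR G c d ∧ Injective d ∧
        (∀ x, x ∉ w.support → ((∃ j, c j = x) ↔ (∃ j, d j = x))) ∧
        (offM M d < offM M c ∨ (offM M d = offM M c ∧ a ∈ M ∧ ∀ j, d j ≠ a)) := by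
  intro L
  induction L with
  | zero =>
      intro c hc i a f w hl hf hfree ha hne
      exact absurd (Walk.eq_of_length_eq_zero (Nat.le_zero.mp hl)) hne
  | succ L ihL =>
      intro c hc i a f w hl hf hfree ha hne
      classical
      set q := w.bypass with hq
      have hqsub : q.support ⊆ w.support := Walk.support_bypass_subset w
      have hqnd : q.support.Nodup := (Walk.bypass_isPath w).support_nodup
      have hqlen : q.length ≤ L + 1 := le_trans (Walk.length_bypass_le w) hl
      by_cases hclear : ∀ v ∈ q.support, v ≠ a → ∀ j, c j ≠ v
      · -- move robot i straight along q to f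
        have hr := reach_along_path hc i q hqnd ha hclear
        have haw : a ∈ w.support := w.start_mem_support
        have hfw : f ∈ w.support := w.end_mem_support
        refine ⟨Function.update c i f, hr, hr.inj hc, ?_, ?_⟩
        · intro x hx
          have hxa : x ≠ a := fun h => hx (h ▸ haw)
          have hxf : x ≠ f := fun h => hx (h ▸ hfw)
          constructor
          · rintro ⟨j, hj⟩
            have hji : j ≠ i := fun h => hxa (by rw [← hj, h, ha])
            exact ⟨j, by rw [Function.update_of_ne hji]; exact hj⟩
          · rintro ⟨j, hj⟩
            by_cases hji : j = i
            · subst hji; rw [Function.update_self] at hj; exact absurd hj.symm hxf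
            · rw [Function.update_of_ne hji] at hj; exact ⟨j, hj⟩
        · by_cases haM : a ∈ M
          · refine Or.inr ⟨?_, haM, ?_⟩
            · unfold offM
              congr 1
              ext k
              simp only [Set.mem_setOf_eq]
              by_cases hk : k = i
              · subst hk; rw [Function.update_self, ha]
                simp [hf, haM]
              · rw [Function.update_of_ne hk]
            · intro j
              by_cases hj : j = i
              · subst hj; rw [Function.update_self]; exact fun h => hne h.symm
              · rw [Function.update_of_ne hj]
                exact fun h => hj (hc (h.trans ha.symm))
          · refine Or.inl ?_
            have hsub2 : {k : Fin n | Function.update c i f k ∉ M} ⊂ {k : Fin n | c k ∉ M} := by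
              constructor
              · intro k hk
                simp only [Set.mem_setOf_eq] at hk ⊢
                by_cases hki : k = i
                · subst hki; rw [Function.update_self] at hk; exact absurd hf hk
                · rwa [Function.update_of_ne hki] at hk
              · intro hsub
                have hi1 : i ∈ {k : Fin n | c k ∉ M} := by simp [Set.mem_setOf_eq, ha, haM]
                have := hsub hi1
                simp only [Set.mem_setOf_eq, Function.update_self] at this
                exact this hf
            exact Set.ncard_lt_ncard hsub2 (Set.toFinite _)
      · push_neg at hclear
        obtain ⟨v, hvq, hva, j, hcj⟩ := hclear
        have hvf : v ≠ f := fun h => hfree j (h ▸ hcj)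
        set q₁ := q.takeUntil v hvq with hq₁
        set q₂ := q.dropUntil v hvq with hq₂
        have hspec : q₁.append q₂ = q := q.take_spec hvq
        have hlen12 : q₁.length + q₂.length = q.length := by
          rw [← hspec, Walk.length_append]
        have hq1pos : 0 < q₁.length := by
          rcases Nat.eq_zero_or_pos q₁.length with h0 | h
          · exact absurd (Walk.eq_of_length_eq_zero h0).symm hva
          · exact h
        have hq2pos : 0 < q₂.length := by
          rcases Nat.eq_zero_or_pos q₂.length with h0 | h
          · exact absurd (Walk.eq_of_length_eq_zero h0) hvf
          · exact h
        have hl2 : q₂.length ≤ L := by omega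
        have hl1 : q₁.length ≤ L := by omega
        have hsub1 : q₁.support ⊆ q.support := Walk.support_takeUntil_subset q hvq
        have hsub2 : q₂.support ⊆ q.support := Walk.support_dropUntil_subset q hvq
        obtain ⟨d₁, hr₁, hinj₁, hocc₁, hout₁⟩ :=
          ihL c hc j v f q₂ hl2 hf hfree hcj hvf
        rcases hout₁ with hlt | ⟨heq₁, hvM, hvfree⟩
        · refine ⟨d₁, hr₁, hinj₁, ?_, Or.inl hlt⟩
          intro x hx
          exact hocc₁ x (fun h => hx (hqsub (hsub2 h)))
        · -- `v ∈ M` got freed; recurse on the prefix walk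
          have handq : (q₁.support ++ q₂.support.tail).Nodup := by
            rw [← Walk.support_append, hspec]; exact hqnd
          have haq2 : a ∉ q₂.support := by
            intro hmem
            have haq1 : a ∈ q₁.support := q₁.start_mem_support
            have : a ∈ q₂.support.tail := by
              have := q₂.support_eq_cons
              rw [this] at hmem
              rcases List.mem_cons.mp hmem with h | h
              · exact absurd h.symm hva
              · exact h
            exact (List.disjoint_of_nodup_append handq) haq1 this
          have haocc : ∃ i₁, d₁ i₁ = a := (hocc₁ a haq2).mp ⟨i, ha⟩
          obtain ⟨i₁, hi₁⟩ := haocc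
          obtain ⟨d₂, hr₂, hinj₂, hocc₂, hout₂⟩ :=
            ihL d₁ hinj₁ i₁ a v q₁ hl1 hvM hvfree hi₁ (fun h => hva h.symm)
          refine ⟨d₂, Relation.ReflTransGen.trans hr₁ hr₂, hinj₂, ?_, ?_⟩
          · intro x hx
            have hx1 : x ∉ q₁.support := fun h => hx (hqsub (hsub1 h))
            have hx2 : x ∉ q₂.support := fun h => hx (hqsub (hsub2 h))
            exact (hocc₁ x hx2).trans (hocc₂ x hx1)
          · rcases hout₂ with hlt | ⟨heq₂, haM, hafree⟩
            · exact Or.inl (heq₁ ▸ hlt)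
            · exact Or.inr ⟨heq₂.trans heq₁, haM, hafree⟩


lemma exists_free {M : Set V} [Fintype V] (hcard : n < M.ncard) (c : Fin n → V) :
    ∃ f ∈ M, ∀ j, c j ≠ f := by
  classical
  by_contra h
  push_neg at h
  have hsub : M ⊆ Set.range c := by
    intro f hf
    obtain ⟨j, hj⟩ := h f hf
    exact ⟨j, hj⟩
  have h1 : M.ncard ≤ (Set.range c).ncard := Set.ncard_le_ncard hsub (Set.toFinite _)
  have h2 : (Set.range c).ncard ≤ n := by
    rw [← Set.image_univ]
    calc (c '' Set.univ).ncard ≤ (Set.univ : Set (Fin n)).ncard :=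
          Set.ncard_image_le (Set.toFinite _)
      _ = n := by rw [Set.ncard_univ]; simp
  omega

lemma park {M : Set V} [Fintype V] (hG : G.Connected) (hcard : n < M.ncard) :
    ∀ c : Fin n → V, Injective c →
      ∃ d : Fin n → V, ReachR G c d ∧ Injective d ∧ ∀ i, d i ∈ M := by
  classical
  intro c hc
  generalize hk : offM M c = k
  induction k using Nat.strong_induction_on generalizing c with
  | _ k ih =>
    by_cases hall : ∀ i, c i ∈ M
    · exact ⟨c, Relation.ReflTransGen.refl, hc, hall⟩
    · push_neg at hall
      obtain ⟨i, hi⟩ := hall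
      obtain ⟨f, hfM, hffree⟩ := exists_free hcard c
      have hne : c i ≠ f := fun h => hi (h ▸ hfM)
      obtain ⟨w⟩ := hG.preconnected (c i) f
      obtain ⟨d, hr, hinj, _, hout⟩ :=
        lemW M w.length c hc i (c i) f w le_rfl hfM hffree rfl hne
      rcases hout with hlt | ⟨_, hciM, _⟩
      · obtain ⟨e, hre, hinje, heM⟩ := ih (offM M d) (hk ▸ hlt) d hinj rfl
        exact ⟨e, Relation.ReflTransGen.trans hr hre, hinje, heM⟩
      · exact absurd hciM hi

/-- Transfer a robot between vertices of `M` while all robots are on `M`,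
using property (i) of a WCS. -/
lemma transfer {M : Set V}
    (hWCS : ∀ u ∈ M, ∀ v ∈ M, u ≠ v →
      ∃ p : G.Walk u v, ∀ w ∈ p.support, w ∈ M → w = u ∨ w = v)
    {c : Fin n → V} (hc : Injective c) (hcM : ∀ i, c i ∈ M)
    (i : Fin n) {b : V} (hbM : b ∈ M) (hbfree : ∀ j, c j ≠ b) :
    ReachR G c (Function.update c i b) := by
  classical
  have hab : c i ≠ b := hbfree i
  obtain ⟨w, hw⟩ := hWCS (c i) (hcM i) b hbM hab
  have hqsub : w.bypass.support ⊆ w.support := Walk.support_bypass_subset w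
  refine reach_along_path hc i w.bypass (Walk.bypass_isPath w).support_nodup rfl ?_
  intro v hv hva j
  by_cases hvb : v = b
  · subst hvb; exact hbfree j
  · have hvM := hw v (hqsub hv)
    intro hcv
    rcases hvM (hcv ▸ hcM j) with h | h
    · exact hva h
    · exact hvb h

lemma rearrange {M : Set V} [Fintype V]
    (hWCS : ∀ u ∈ M, ∀ v ∈ M, u ≠ v →
      ∃ p : G.Walk u v, ∀ w ∈ p.support, w ∈ M → w = u ∨ w = v)
    (hcard : n < M.ncard) :
    ∀ c c' : Fin n → V, Injective c → Injective c' →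
      (∀ i, c i ∈ M) → (∀ i, c' i ∈ M) → ReachR G c c' := by
  classical
  intro c c' hc hc' hcM hc'M
  generalize hk : (Finset.univ.filter fun i => c i ≠ c' i).card = k
  induction k using Nat.strong_induction_on generalizing c with
  | _ k ih =>
    by_cases hall : ∀ i, c i = c' i
    · have : c = c' := funext hall
      rw [this]
      exact Relation.ReflTransGen.refl
    · push_neg at hall
      obtain ⟨i, hi⟩ := hall
      by_cases hocc : ∃ j, c j = c' i
      · -- target occupied: first move the blocker to a free vertex
        obtain ⟨j, hj⟩ := hocc
        have hji : j ≠ i := fun h => hi (h ▸ hj)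
        obtain ⟨f, hfM, hffree⟩ := exists_free hcard c
        have hr₁ : ReachR G c (Function.update c j f) := transfer hWCS hc hcM j hfM hffree
        set c₂ := Function.update c j f with hc₂
        have hinj₂ : Injective c₂ := hr₁.inj hc
        have hc₂M : ∀ k, c₂ k ∈ M := by
          intro k
          by_cases hkj : k = j
          · subst hkj; rw [hc₂, Function.update_self]; exact hfM
          · rw [hc₂, Function.update_of_ne hkj]; exact hcM k
        have hfree₂ : ∀ k, c₂ k ≠ c' i := by
          intro k
          by_cases hkj : k = j
          · subst hkj; rw [hc₂, Function.update_self]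
            exact fun h => hffree _ (hj.trans h.symm)
          · rw [hc₂, Function.update_of_ne hkj]
            exact fun h => hkj (hc (h.trans hj.symm))
        have hr₂ : ReachR G c₂ (Function.update c₂ i (c' i)) :=
          transfer hWCS hinj₂ hc₂M i (hc'M i) hfree₂
        set c₃ := Function.update c₂ i (c' i) with hc₃
        have hinj₃ : Injective c₃ := hr₂.inj hinj₂
        have hc₃M : ∀ k, c₃ k ∈ M := by
          intro k
          by_cases hki : k = i
          · subst hki; rw [hc₃, Function.update_self]; exact hc'M k
          · rw [hc₃, Function.update_of_ne hki]; exact hc₂M k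
        have hcard3 : (Finset.univ.filter fun k => c₃ k ≠ c' k).card < k := by
          rw [← hk]
          apply Finset.card_lt_card
          constructor
          · intro l hl
            simp only [Finset.mem_filter, Finset.mem_univ, true_and] at hl ⊢
            by_cases hli : l = i
            · subst hli
              rw [hc₃, Function.update_self] at hl
              exact absurd rfl hl
            · rw [hc₃, Function.update_of_ne hli] at hl
              by_cases hlj : l = j
              · subst hlj
                exact fun hcc => hji (hc' (hj.symm.trans hcc)).symm
              · rwa [hc₂, Function.update_of_ne hlj] at hl
          · intro hsub
            have hi1 : i ∈ Finset.univ.filter fun k => c k ≠ c' k := by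
              simp [hi]
            have := hsub hi1
            simp only [Finset.mem_filter, Finset.mem_univ, true_and] at this
            rw [hc₃, Function.update_self] at this
            exact this rfl
        obtain hrest := ih _ hcard3 c₃ hinj₃ hc₃M rfl
        exact Relation.ReflTransGen.trans hr₁ (Relation.ReflTransGen.trans hr₂ hrest)
      · -- target free: just move robot i there
        push_neg at hocc
        have hr₁ : ReachR G c (Function.update c i (c' i)) :=
          transfer hWCS hc hcM i (hc'M i) hocc
        set c₂ := Function.update c i (c' i) with hc₂
        have hinj₂ : Injective c₂ := hr₁.inj hc
        have hc₂M : ∀ k, c₂ k ∈ M := by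
          intro k
          by_cases hki : k = i
          · subst hki; rw [hc₂, Function.update_self]; exact hc'M k
          · rw [hc₂, Function.update_of_ne hki]; exact hcM k
        have hcard2 : (Finset.univ.filter fun k => c₂ k ≠ c' k).card < k := by
          rw [← hk]
          apply Finset.card_lt_card
          constructor
          · intro l hl
            simp only [Finset.mem_filter, Finset.mem_univ, true_and] at hl ⊢
            by_cases hli : l = i
            · subst hli
              rw [hc₂, Function.update_self] at hl
              exact absurd rfl hl
            · rwa [hc₂, Function.update_of_ne hli] at hl
          · intro hsub
            have hi1 : i ∈ Finset.univ.filter fun k => c k ≠ c' k := by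
              simp [hi]
            have := hsub hi1
            simp only [Finset.mem_filter, Finset.mem_univ, true_and] at this
            rw [hc₂, Function.update_self] at this
            exact this rfl
        obtain hrest := ih _ hcard2 c₂ hinj₂ hc₂M rfl
        exact Relation.ReflTransGen.trans hr₁ hrest


lemma reach_chain {c c' : Fin n → V} (h : ReachR G c c') :
    ∃ T : ℕ, ∃ p : ℕ → Fin n → V, p 0 = c ∧ p T = c' ∧
      ∀ t < T, MoveR G (p t) (p (t + 1)) := by
  induction h with
  | refl => exact ⟨0, fun _ => c, rfl, rfl, fun t ht => absurd ht (Nat.not_lt_zero t)⟩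
  | @tail b c'' hab hbc ih =>
      obtain ⟨T, p, h0, hT, hstep⟩ := ih
      refine ⟨T + 1, fun t => if t ≤ T then p t else c'', ?_, ?_, ?_⟩
      · simp only [Nat.zero_le, if_pos]; exact h0
      · simp only [if_neg (by omega : ¬ T + 1 ≤ T)]
      · intro t ht
        rcases Nat.lt_succ_iff_lt_or_eq.mp ht with h | h
        · have h1 : t ≤ T := le_of_lt h
          have h2 : t + 1 ≤ T := h
          simp only [if_pos h1, if_pos h2]
          exact hstep t h
        · subst h
          have e1 : (if t ≤ t then p t else c'') = p t := if_pos le_rfl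
          have e2 : (if t + 1 ≤ t then p (t + 1) else c'') = c'' := if_neg (by omega)
          beta_reduce
          rw [e1, e2, hT]
          exact hbc

end MRPPAux


/-- A set `M` of vertices of `G` is *well-connected* if (i) any two distinct
vertices of `M` are joined by a path in `G` avoiding all other vertices of `M`,
and (ii) the subgraph induced by the complement of `M` is connected
(the empty induced subgraph being regarded as connected). -/
def IsWCS {V : Type*} (G : SimpleGraph V) (M : Set V) : Prop :=
  (∀ u ∈ M, ∀ v ∈ M, u ≠ v →
    ∃ p : G.Walk u v, ∀ w ∈ p.support, w ∈ M → w = u ∨ w = v) ∧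
  (G.induce Mᶜ).Preconnected

/-- `p` (defined on time steps `0, …, T`) is a solution of the multi-robot path
planning instance on `G` with start vertices `s` and goal vertices `g`: every robot
starts at its start, ends at its goal, at each step stays put or moves along an edge
of `G`, no two robots occupy the same vertex at the same time step, and no two robots
swap along an edge in the same step. -/
def IsMRPPSolution {V : Type*} (G : SimpleGraph V) {n : ℕ} (s g : Fin n → V)
    (T : ℕ) (p : Fin n → ℕ → V) : Prop :=
  (∀ i, p i 0 = s i) ∧ (∀ i, p i T = g i) ∧
  (∀ i, ∀ t < T, p i (t + 1) = p i t ∨ G.Adj (p i t) (p i (t + 1))) ∧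
  (∀ i j, i ≠ j → ∀ t ≤ T, p i t ≠ p j t) ∧
  (∀ i j, i ≠ j → ∀ t < T, ¬ (p i (t + 1) = p j t ∧ p j (t + 1) = p i t))

/-- If a connected graph admits a well-connected set of size at least `2n`, then every
MRPP instance on it with `n` robots, pairwise-distinct starts and pairwise-distinct
goals — regardless of the distribution of starts and goals — is solvable. -/
theorem mrpp_solvable_of_wcs {V : Type*} [Fintype V] (G : SimpleGraph V)
    (hG : G.Connected) (n : ℕ)
    (hwcs : ∃ M : Set V, IsWCS G M ∧ 2 * n ≤ Nat.card M)
    (s g : Fin n → V) (hs : Function.Injective s) (hg : Function.Injective g) :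
    ∃ (T : ℕ) (p : Fin n → ℕ → V), IsMRPPSolution G s g T p := by
  classical
  obtain ⟨M, ⟨hW1, _⟩, hcard⟩ := hwcs
  rcases Nat.eq_zero_or_pos n with hn | hn
  · subst hn
    exact ⟨0, fun i _ => i.elim0, fun i => i.elim0, fun i => i.elim0,
      fun i => i.elim0, fun i => i.elim0, fun i => i.elim0⟩
  · have hcard' : n < M.ncard := by
      have : Nat.card M = M.ncard := Nat.card_coe_set_eq M
      omega
    obtain ⟨cM, h1, hinj1, hM1⟩ := MRPPAux.park hG hcard' s hs
    obtain ⟨dM, h2, hinj2, hM2⟩ := MRPPAux.park hG hcard' g hg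
    have h3 := MRPPAux.rearrange hW1 hcard' cM dM hinj1 hinj2 hM1 hM2
    have hreach : MRPPAux.ReachR G s g :=
      Relation.ReflTransGen.trans h1 (Relation.ReflTransGen.trans h3 (h2.symm' hg))
    obtain ⟨T, p, h0, hT, hstep⟩ := MRPPAux.reach_chain hreach
    have hinj : ∀ t ≤ T, Function.Injective (p t) := by
      intro t
      induction t with
      | zero => intro _; rw [h0]; exact hs
      | succ t iht =>
          intro ht
          exact (hstep t (by omega)).inj (iht (by omega))
    refine ⟨T, fun i t => p t i, ?_, ?_, ?_, ?_, ?_⟩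
    · intro i; show p 0 i = s i; rw [h0]
    · intro i; show p T i = g i; rw [hT]
    · intro i t ht
      show p (t+1) i = p t i ∨ G.Adj (p t i) (p (t+1) i)
      obtain ⟨i₀, hadj, _, hoth⟩ := hstep t ht
      by_cases hi : i = i₀
      · subst hi; exact Or.inr hadj
      · exact Or.inl (hoth i hi)
    · intro i j hij t ht hcontra
      exact hij (hinj t ht hcontra)
    · rintro i j hij t ht ⟨ha, hb⟩
      beta_reduce at ha hb
      obtain ⟨i₀, hadj, hf, hoth⟩ := hstep t ht
      by_cases hi : i = i₀
      · subst hi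
        have hjne : j ≠ i := Ne.symm hij
        have : p (t + 1) j = p t j := hoth j (by simpa using hjne)
        have : p (t + 1) i = p (t + 1) j := by rw [this, ha]
        exact hij (hinj (t + 1) (by omega) this)
      · by_cases hj : j = i₀
        · subst hj
          have : p (t + 1) i = p t i := hoth i hi
          have : p (t + 1) j = p (t + 1) i := by rw [this, hb]
          exact hij (hinj (t + 1) (by omega) this).symm
        · have h1' : p (t + 1) i = p t i := hoth i hi
          have : p t i = p t j := by rw [← h1', ha]
          exact hij (hinj t (by omega) this)
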